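/- Suppose M is an (ℓ+1)×(ℓ+1) matrix and m ∈ ℝ^{ℓ+1} with M_{ij} ≤ 0 for i ≠ j, Mᵀ𝟙 ≥ 0, and M𝟙 + m ≥ 0. Then there exist a matrix Λ with nonnegative entries and nonnegative vectors γ, δ ∈ ℝ^{ℓ+1} such that M = diag(Λᵀ𝟙) − Λ + diag(γ) and m = (Λ − Λᵀ)𝟙 − γ + δ. -/
import Mathlib


/-- Every multiplier in the dual cone `𝒦*` arises as a nonnegative
combination of the convex-interpolation inequalities. -/
theorem stmt5 (ℓ : ℕ) (M : Matrix (Fin (ℓ + 1)) (Fin (ℓ + 1)) ℝ) (m : Fin (ℓ + 1) → ℝ)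
    (hoff : ∀ i j, i ≠ j → M i j ≤ 0)
    (hcol : ∀ j, 0 ≤ ∑ i, M i j)
    (hrowm : ∀ i, 0 ≤ (∑ j, M i j) + m i) :
    ∃ (Λ : Matrix (Fin (ℓ + 1)) (Fin (ℓ + 1)) ℝ) (γ δ : Fin (ℓ + 1) → ℝ),
      (∀ i j, 0 ≤ Λ i j) ∧ (∀ i, 0 ≤ γ i) ∧ (∀ i, 0 ≤ δ i) ∧
      (∀ i j, M i j = (if i = j then (∑ k, Λ k i) + γ i else 0) - Λ i j) ∧
      (∀ i, m i = (∑ j, Λ i j) - (∑ j, Λ j i) - γ i + δ i) := by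
  refine ⟨fun i j => if i = j then 0 else -M i j, fun i => ∑ k, M k i,
    fun i => (∑ j, M i j) + m i, ?_, hcol, hrowm, ?_, ?_⟩
  · intro i j
    by_cases h : i = j <;> simp [h]
    · linarith [hoff i j h]
  · have hsum : ∀ i j, (if i = j then (0:ℝ) else -M i j)
        = (if i = j then M i j else 0) - M i j := by
      intro i j; by_cases h : i = j <;> simp [h]
    have hcolsum : ∀ i, ∑ k, (if k = i then (0:ℝ) else -M k i)
        = M i i - ∑ k, M k i := by
      intro i
      simp only [hsum, Finset.sum_sub_distrib, Finset.sum_ite_eq', Finset.mem_univ,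
        if_true]
    intro i j
    by_cases h : i = j
    · subst h
      simp only [if_pos rfl, hcolsum]
      simp
    · simp [h]
  · intro i
    have hrowsum : ∑ j, (if i = j then (0:ℝ) else -M i j) = M i i - ∑ j, M i j := by
      have : ∀ j, (if i = j then (0:ℝ) else -M i j)
          = (if i = j then M i j else 0) - M i j := by
        intro j; by_cases h : i = j <;> simp [h]
      simp only [this, Finset.sum_sub_distrib, Finset.sum_ite_eq, Finset.mem_univ,
        if_true]
    have hcolsum : ∑ j, (if j = i then (0:ℝ) else -M j i) = M i i - ∑ j, M j i := by
      have : ∀ j, (if j = i then (0:ℝ) else -M j i)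
          = (if j = i then M j i else 0) - M j i := by
        intro j; by_cases h : j = i <;> simp [h]
      simp only [this, Finset.sum_sub_distrib, Finset.sum_ite_eq', Finset.mem_univ,
        if_true]
    rw [hrowsum, hcolsum]
    ring
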